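/- Let X ⊆ ℝ^d be nonempty, let f : ℝ^d → ℝ^m be continuous, and let k, m ≥ 1. Let P be a Borel probability measure on ℝ^{k×m} with topological support 𝒲, and for each W ∈ 𝒲 let μ_W be a Borel probability measure on ℝ^d with topological support equal to X. Let η ↦ ν_η (η ∈ ℝ^k) be a KL-identifiable family of probability measures on a measurable space, with all KL integrands below assumed measurable and integrable. Assume: (A4, sufficient representation variability) there exist x^(1),…,x^(m) ∈ X such that the matrix [f(x^(1)) ⋯ f(x^(m))] ∈ ℝ^{m×m} is invertible; (A5, sufficient task variability) there exist W^(1),…,W^(m) ∈ 𝒲 and indices i_1,…,i_m ∈ {1,…,k} such that the rows W^(1)_{i_1,:},…,W^(m)_{i_m,:} are linearly independent; (A6, intra-support sufficient task variability) for every S ⊆ {1,…,m} with P[colsupp(W) = S] > 0 and every nonzero a ∈ ℝ^m with supp(a) ⊆ S, P[{W : W a = 0} ∩ {colsupp(W) = S}] = 0; (A7, sufficient support variability) for every j ∈ {1,…,m}, the union of all sets S with P[colsupp(W) = S] > 0 and j ∉ S equals {1,…,m} \ {j}. For a continuous g : ℝ^d → ℝ^m define the inner objective R_g(W̃, W) :=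 ∫ klDiv(ν_{W f(x)}, ν_{W̃ g(x)}) dμ_W(x); call a pair (g, V) with V : 𝒲 → ℝ^{k×m} feasible if for every W ∈ 𝒲, V(W) minimizes R_g(·, W) over {W̃ ∈ ℝ^{k×m} : ‖W̃‖_{2,0} ≤ ‖W‖_{2,0}}, and define its outer value J(g, V) := ∫ R_g(V(W), W) dP(W). If (f̂, Ŵ) is a feasible pair with f̂ continuous and J(f̂, Ŵ) ≤ J(g, V) for every feasible pair (g, V), then f̂ is disentangled with respect to f: there exist a permutation matrix Π ∈ ℝ^{m×m} and an invertible diagonal matrix D ∈ ℝ^{m×m} such that f̂(x) = D Π f(x) for all x ∈ X. -/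

import Mathlib

open MeasureTheory
open scoped ENNReal BigOperators

noncomputable section

/-- Matrices over `ℝ` carry the Borel σ-algebra of their (product) topology. -/
instance matrixMeasurableSpace {k m : ℕ} :
    MeasurableSpace (Matrix (Fin k) (Fin m) ℝ) := borel _

instance matrixBorelSpace {k m : ℕ} : BorelSpace (Matrix (Fin k) (Fin m) ℝ) := ⟨rfl⟩

/-- The topological support of a measure: the points all of whose open neighbourhoods
have positive measure. -/
def msupport {α : Type*} [TopologicalSpace α] [MeasurableSpace α]
    (P : Measure α) : Set α :=
  {x | ∀ U : Set α, IsOpen U → x ∈ U → 0 < P U}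

/-- The column support of a matrix: indices of its nonzero columns. -/
def colSupp {k m : ℕ} (W : Matrix (Fin k) (Fin m) ℝ) : Set (Fin m) :=
  {j | ∃ i, W i j ≠ 0}

/-- The column sparsity `‖A‖_{2,0}`: the number of nonzero columns. -/
def colSparsity {k m : ℕ} (W : Matrix (Fin k) (Fin m) ℝ) : ℕ :=
  (colSupp W).ncard

/-- A matrix is a permutation matrix if it is obtained from a permutation `σ`
by putting a `1` in entry `(i, σ i)` and `0` elsewhere. -/
def IsPermMatrix {m : ℕ} (P : Matrix (Fin m) (Fin m) ℝ) : Prop :=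
  ∃ σ : Equiv.Perm (Fin m), P = Matrix.of fun i j => if σ i = j then (1 : ℝ) else 0

variable {d k m : ℕ} {Y : Type*} [MeasurableSpace Y]

/-- The inner population risk
`R_g(W̃, W) = ∫ klDiv (ν (W f x)) (ν (W̃ g x)) dμ_W(x)`. -/
def innerRisk (klDiv : Measure Y → Measure Y → ℝ≥0∞)
    (ν : (Fin k → ℝ) → Measure Y)
    (μ : Matrix (Fin k) (Fin m) ℝ → Measure (Fin d → ℝ))
    (f g : (Fin d → ℝ) → Fin m → ℝ)
    (Wt W : Matrix (Fin k) (Fin m) ℝ) : ℝ≥0∞ :=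
  ∫⁻ x, klDiv (ν (W.mulVec (f x))) (ν (Wt.mulVec (g x))) ∂(μ W)

/-- A pair `(g, V)` is feasible for the bi-level problem with the per-task sparsity
constraint when `g` is continuous and, for every task `W` in the support of `P`,
`V W` minimizes `R_g(·, W)` over `{W̃ : ‖W̃‖_{2,0} ≤ ‖W‖_{2,0}}` (and satisfies the
constraint itself). -/
def FeasibleSparse (klDiv : Measure Y → Measure Y → ℝ≥0∞)
    (ν : (Fin k → ℝ) → Measure Y)
    (μ : Matrix (Fin k) (Fin m) ℝ → Measure (Fin d → ℝ))
    (f : (Fin d → ℝ) → Fin m → ℝ)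
    (P : Measure (Matrix (Fin k) (Fin m) ℝ))
    (g : (Fin d → ℝ) → Fin m → ℝ)
    (V : Matrix (Fin k) (Fin m) ℝ → Matrix (Fin k) (Fin m) ℝ) : Prop :=
  Continuous g ∧ ∀ W ∈ msupport P,
    colSparsity (V W) ≤ colSparsity W ∧
    ∀ Wt : Matrix (Fin k) (Fin m) ℝ, colSparsity Wt ≤ colSparsity W →
      innerRisk klDiv ν μ f g (V W) W ≤ innerRisk klDiv ν μ f g Wt W

/-- The outer objective `J(g, V) = ∫ R_g(V W, W) dP(W)`. -/
def outerObj (klDiv : Measure Y → Measure Y → ℝ≥0∞)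
    (ν : (Fin k → ℝ) → Measure Y)
    (μ : Matrix (Fin k) (Fin m) ℝ → Measure (Fin d → ℝ))
    (f : (Fin d → ℝ) → Fin m → ℝ)
    (P : Measure (Matrix (Fin k) (Fin m) ℝ))
    (g : (Fin d → ℝ) → Fin m → ℝ)
    (V : Matrix (Fin k) (Fin m) ℝ → Matrix (Fin k) (Fin m) ℝ) : ℝ≥0∞ :=
  ∫⁻ W, innerRisk klDiv ν μ f g (V W) W ∂P
section AuxLemmas

open Set

/-- The support of a measure is contained in any closed set of full measure. -/
lemma msupport_subset_of_isClosed {α : Type*} [TopologicalSpace α] [MeasurableSpace α]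
    (P : Measure α) {C : Set α} (hC : IsClosed C) (h0 : P Cᶜ = 0) :
    msupport P ⊆ C := by
  intro x hx
  by_contra hxC
  have := hx Cᶜ hC.isOpen_compl hxC
  rw [h0] at this
  exact lt_irrefl 0 this

/-- In a second countable space the complement of the support is null. -/
lemma compl_msupport_null {α : Type*} [TopologicalSpace α] [MeasurableSpace α]
    [SecondCountableTopology α] (P : Measure α) :
    P (msupport P)ᶜ = 0 := by
  obtain ⟨B, hBc, -, hB⟩ := TopologicalSpace.exists_countable_basis α
  have hsub : (msupport P)ᶜ ⊆ ⋃ U ∈ {U ∈ B | P U = 0}, U := by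
    intro x hx
    simp only [Set.mem_compl_iff, msupport, Set.mem_setOf_eq, not_forall] at hx
    obtain ⟨U, hU, hxU, hPU⟩ := hx
    have hPU0 : P U = 0 := by
      rw [not_lt] at hPU
      exact le_antisymm hPU zero_le
    obtain ⟨V, hV, hxV, hVU⟩ := hB.exists_subset_of_mem_open hxU hU
    exact Set.mem_biUnion ⟨hV, measure_mono_null hVU hPU0⟩ hxV
  refine measure_mono_null hsub ?_
  exact (measure_biUnion_null_iff (hBc.mono (Set.sep_subset _ _))).2 fun U hU => hU.2

lemma aux_continuous_entry {k m : ℕ} (i : Fin k) (j : Fin m) :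
    Continuous fun W : Matrix (Fin k) (Fin m) ℝ => W i j :=
  (continuous_apply j).comp (continuous_apply (A := fun _ : Fin k => Fin m → ℝ) i)

lemma aux_continuous_mulVec_left {k m : ℕ} (u : Fin m → ℝ) :
    Continuous fun W : Matrix (Fin k) (Fin m) ℝ => W.mulVec u := by
  refine continuous_pi fun i => ?_
  have h : (fun W : Matrix (Fin k) (Fin m) ℝ => W.mulVec u i)
      = fun W => ∑ j, W i j * u j := rfl
  rw [h]
  exact continuous_finset_sum _ fun j _ => (aux_continuous_entry i j).mul continuous_const

lemma aux_continuous_vecMul_row {k m : ℕ} (F : Matrix (Fin m) (Fin m) ℝ) (i : Fin k) :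
    Continuous fun W : Matrix (Fin k) (Fin m) ℝ => Matrix.vecMul (W i) F := by
  refine continuous_pi fun j => ?_
  have h : (fun W : Matrix (Fin k) (Fin m) ℝ => (Matrix.vecMul (W i) F) j)
      = fun W => ∑ t, W i t * F t j := rfl
  rw [h]
  exact continuous_finset_sum _ fun t _ => (aux_continuous_entry i t).mul continuous_const

lemma aux_continuous_mulVec_right {d k m : ℕ} (W : Matrix (Fin k) (Fin m) ℝ)
    {g : (Fin d → ℝ) → Fin m → ℝ} (hg : Continuous g) :
    Continuous fun x => W.mulVec (g x) := by
  refine continuous_pi fun i => ?_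
  have h : (fun x => W.mulVec (g x) i) = fun x => ∑ j, W i j * g x j := rfl
  rw [h]
  exact continuous_finset_sum _ fun j _ =>
    continuous_const.mul ((continuous_apply j).comp hg)

/-- Counting bound from linear independence: a set `T` of independent rows needs at least
`|T|` nonzero columns. -/
lemma aux_card_le_biUnion {m : ℕ} {M : Matrix (Fin m) (Fin m) ℝ}
    (hM : LinearIndependent ℝ (fun i => M i)) (T : Set (Fin m)) :
    T.ncard ≤ (⋃ i ∈ T, {j | M i j ≠ 0}).ncard := by
  classical
  set C : Set (Fin m) := ⋃ i ∈ T, {j | M i j ≠ 0} with hC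
  have hrows : LinearIndependent ℝ (fun i : T => M (i : Fin m)) :=
    hM.comp _ Subtype.val_injective
  let res : (Fin m → ℝ) →ₗ[ℝ] (C → ℝ) := LinearMap.funLeft ℝ ℝ Subtype.val
  have hvC : ∀ v ∈ Submodule.span ℝ (Set.range fun i : T => M (i : Fin m)),
      ∀ j ∉ C, v j = 0 := by
    intro v hv
    induction hv using Submodule.span_induction with
    | mem x hx =>
      intro j hj
      obtain ⟨i, rfl⟩ := hx
      by_contra h0
      exact hj (Set.mem_biUnion i.2 h0)
    | zero => intro j _; rfl
    | add x y hx hy ihx ihy => intro j hj; simp [ihx j hj, ihy j hj]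
    | smul c x hx ih => intro j hj; simp [ih j hj]
  have hdisj : Disjoint (Submodule.span ℝ (Set.range fun i : T => M (i : Fin m)))
      (LinearMap.ker res) := by
    rw [Submodule.disjoint_def]
    intro v hv hv0
    rw [LinearMap.mem_ker] at hv0
    funext j
    by_cases hj : j ∈ C
    · exact congrFun hv0 ⟨j, hj⟩
    · exact hvC v hv j hj
  have hres : LinearIndependent ℝ (⇑res ∘ fun i : T => M (i : Fin m)) := hrows.map hdisj
  haveI : Fintype T := Fintype.ofFinite _
  haveI : Fintype C := Fintype.ofFinite _
  have h1 : Fintype.card T ≤ Fintype.card C := by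
    have h2 := hres.fintype_card_le_finrank
    rwa [Module.finrank_fintype_fun_eq_card] at h2
  have e1 : T.ncard = Fintype.card T := by
    rw [← Nat.card_coe_set_eq, Nat.card_eq_fintype_card]
  have e2 : C.ncard = Fintype.card C := by
    rw [← Nat.card_coe_set_eq, Nat.card_eq_fintype_card]
  rw [e1, e2]
  exact h1

/-- Combinatorial core: the support structure forces a permutation pattern. -/
lemma aux_perm {m : ℕ} {M : Matrix (Fin m) (Fin m) ℝ}
    (hM : LinearIndependent ℝ (fun i => M i))
    (hcols : ∀ j, ∃ i, M i j ≠ 0)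
    (𝒮 : Set (Set (Fin m)))
    (hstar : ∀ S ∈ 𝒮, (⋃ i ∈ S, {j | M i j ≠ 0}).ncard ≤ S.ncard)
    (hcover : ∀ p : Fin m, (⋃ S ∈ {S | S ∈ 𝒮 ∧ p ∉ S}, S) = ({p}ᶜ : Set (Fin m))) :
    ∃ q : Fin m → Fin m, Function.Injective q ∧
      (∀ i, M i (q i) ≠ 0) ∧ (∀ i j, M i j ≠ 0 → j = q i) := by
  classical
  set C : Set (Fin m) → Set (Fin m) := fun S => ⋃ i ∈ S, {j | M i j ≠ 0} with hCdef
  have hlow : ∀ T, T.ncard ≤ (C T).ncard := aux_card_le_biUnion hM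
  have hCunion : ∀ S1 S2, C (S1 ∪ S2) = C S1 ∪ C S2 := fun S1 S2 =>
    Set.biUnion_union S1 S2 _
  have hCinter : ∀ S1 S2, C (S1 ∩ S2) ⊆ C S1 ∩ C S2 := fun S1 S2 =>
    Set.subset_inter
      (Set.biUnion_mono Set.inter_subset_left fun _ _ => subset_rfl)
      (Set.biUnion_mono Set.inter_subset_right fun _ _ => subset_rfl)
  have hkey : ∀ S1 S2, (C S1).ncard ≤ S1.ncard → (C S2).ncard ≤ S2.ncard →
      (C (S1 ∪ S2)).ncard ≤ (S1 ∪ S2).ncard := by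
    intro S1 S2 h1 h2
    have e1 : (C S1 ∪ C S2).ncard + (C S1 ∩ C S2).ncard = (C S1).ncard + (C S2).ncard :=
      Set.ncard_union_add_ncard_inter _ _ (Set.toFinite _) (Set.toFinite _)
    have e2 : (S1 ∪ S2).ncard + (S1 ∩ S2).ncard = S1.ncard + S2.ncard :=
      Set.ncard_union_add_ncard_inter _ _ (Set.toFinite _) (Set.toFinite _)
    have h3 : (S1 ∩ S2).ncard ≤ (C S1 ∩ C S2).ncard :=
      le_trans (hlow _) (Set.ncard_le_ncard (hCinter S1 S2) (Set.toFinite _))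
    have h4 : (C (S1 ∪ S2)).ncard + (S1 ∩ S2).ncard ≤ (S1 ∪ S2).ncard + (S1 ∩ S2).ncard := by
      calc (C (S1 ∪ S2)).ncard + (S1 ∩ S2).ncard
          ≤ (C S1 ∪ C S2).ncard + (C S1 ∩ C S2).ncard := by
            rw [hCunion]; exact Nat.add_le_add le_rfl h3
        _ = (C S1).ncard + (C S2).ncard := e1
        _ ≤ S1.ncard + S2.ncard := Nat.add_le_add h1 h2
        _ = (S1 ∪ S2).ncard + (S1 ∩ S2).ncard := e2.symm
    exact Nat.le_of_add_le_add_right h4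
  have hmiss : ∀ p : Fin m, (C ({p}ᶜ)).ncard ≤ ({p}ᶜ : Set (Fin m)).ncard := by
    intro p
    have hind : ∀ 𝒯 : Set (Set (Fin m)), 𝒯.Finite →
        (∀ S ∈ 𝒯, (C S).ncard ≤ S.ncard) → (C (⋃₀ 𝒯)).ncard ≤ (⋃₀ 𝒯).ncard := by
      intro 𝒯 h𝒯
      induction 𝒯, h𝒯 using Set.Finite.induction_on with
      | empty => intro _; simp [hCdef]
      | insert ha hs ih =>
        intro hall
        rw [Set.sUnion_insert]
        exact hkey _ _ (hall _ (Set.mem_insert _ _))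
          (ih fun S hS => hall S (Set.mem_insert_of_mem _ hS))
    have h5 := hind {S | S ∈ 𝒮 ∧ p ∉ S} (Set.toFinite _) (fun S hS => hstar S hS.1)
    rwa [Set.sUnion_eq_biUnion, hcover p] at h5
  have hqexists : ∀ p : Fin m, ∃ j, j ∉ C {p}ᶜ := by
    intro p
    by_contra h
    push_neg at h
    have huniv : C ({p}ᶜ) = Set.univ := Set.eq_univ_of_forall h
    have h1 := hmiss p
    rw [huniv] at h1
    have hlt : ({p}ᶜ : Set (Fin m)).ncard < (Set.univ : Set (Fin m)).ncard :=
      Set.ncard_lt_ncard ⟨Set.subset_univ _, fun hsub =>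
        (hsub (Set.mem_univ p)) rfl⟩ (Set.toFinite _)
    exact absurd h1 (not_le_of_gt hlt)
  choose q hq using hqexists
  have hqnot : ∀ p, ∀ i, i ≠ p → M i (q p) = 0 := by
    intro p i hip
    by_contra h
    exact hq p (Set.mem_biUnion (show i ∈ ({p}ᶜ : Set (Fin m)) from hip) h)
  have hqp : ∀ p, M p (q p) ≠ 0 := by
    intro p
    obtain ⟨i, hi⟩ := hcols (q p)
    rcases eq_or_ne i p with rfl | hne
    · exact hi
    · exact absurd (hqnot p i hne) hi
  have hqinj : Function.Injective q := by
    intro p1 p2 h12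
    by_contra hne
    obtain ⟨i, hi⟩ := hcols (q p1)
    rcases eq_or_ne i p1 with rfl | h1
    · have h0 : M i (q p2) = 0 := hqnot p2 i hne
      rw [← h12] at h0
      exact hi h0
    · exact hi (hqnot p1 i h1)
  have hqsurj : Function.Surjective q := Finite.injective_iff_surjective.mp hqinj
  refine ⟨q, hqinj, hqp, ?_⟩
  intro i j hij
  obtain ⟨p, rfl⟩ := hqsurj j
  rcases eq_or_ne i p with rfl | hne
  · rfl
  · exact absurd (hqnot p i hne) hij

end AuxLemmas

/-- **Sparse multi-task learning yields disentanglement (per-task sparsity constraint,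
Theorem 1).**  Let `Xs ⊆ ℝ^d` be nonempty, `f : ℝ^d → ℝ^m` continuous, `k, m ≥ 1`, `P` a
Borel probability measure on `ℝ^{k×m}` with support `𝒲 = msupport P`, and for each
`W ∈ 𝒲` let `μ W` be a Borel probability measure on `ℝ^d` with topological support `Xs`.
Let `η ↦ ν η` be a KL-identifiable family of probability measures (`klDiv` is the
Kullback–Leibler divergence, `ℝ≥0∞`-valued, with `klDiv ρ ρ = 0`), with all KL integrands
measurable.  Under assumptions (A4)–(A7), if `(f̂, Ŵ)` is feasible with `f̂` continuous
and its outer value is minimal among all feasible pairs, then `f̂` is disentangled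
w.r.t. `f`: there are a permutation matrix `Π` and an invertible diagonal matrix `D`
such that `f̂ x = (D Π) (f x)` for all `x ∈ Xs`. -/
theorem sparse_multitask_learning_disentangles
    (hk : 1 ≤ k) (hm : 1 ≤ m)
    (Xs : Set (Fin d → ℝ)) (hXs : Xs.Nonempty)
    (f : (Fin d → ℝ) → Fin m → ℝ) (hf : Continuous f)
    (P : Measure (Matrix (Fin k) (Fin m) ℝ)) [IsProbabilityMeasure P]
    (μ : Matrix (Fin k) (Fin m) ℝ → Measure (Fin d → ℝ))
    (hμprob : ∀ W ∈ msupport P, IsProbabilityMeasure (μ W))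
    (hμsupp : ∀ W ∈ msupport P, msupport (μ W) = Xs)
    (ν : (Fin k → ℝ) → Measure Y) [∀ η, IsProbabilityMeasure (ν η)]
    (klDiv : Measure Y → Measure Y → ℝ≥0∞)
    (hkl_self : ∀ ρ : Measure Y, klDiv ρ ρ = 0)
    (hkl_id : ∀ η η' : Fin k → ℝ, klDiv (ν η) (ν η') = 0 → η = η')
    (hmeas_inner : ∀ g : (Fin d → ℝ) → Fin m → ℝ, Continuous g →
      ∀ Wt W : Matrix (Fin k) (Fin m) ℝ,
        Measurable fun x => klDiv (ν (W.mulVec (f x))) (ν (Wt.mulVec (g x))))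
    (hA4 : ∃ xs : Fin m → (Fin d → ℝ), (∀ t, xs t ∈ Xs) ∧
      IsUnit (Matrix.of fun i t => f (xs t) i).det)
    (hA5 : ∃ (Ws : Fin m → Matrix (Fin k) (Fin m) ℝ) (idx : Fin m → Fin k),
      (∀ t, Ws t ∈ msupport P) ∧
      LinearIndependent ℝ fun t => Ws t (idx t))
    (hA6 : ∀ S : Set (Fin m), 0 < P {W | colSupp W = S} →
      ∀ a : Fin m → ℝ, a ≠ 0 → {j | a j ≠ 0} ⊆ S →
        P ({W | W.mulVec a = 0} ∩ {W | colSupp W = S}) = 0)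
    (hA7 : ∀ j : Fin m,
      (⋃ S ∈ {S : Set (Fin m) | 0 < P {W | colSupp W = S} ∧ j ∉ S}, S) =
        ({j}ᶜ : Set (Fin m)))
    (fhat : (Fin d → ℝ) → Fin m → ℝ) (hfhat : Continuous fhat)
    (What : Matrix (Fin k) (Fin m) ℝ → Matrix (Fin k) (Fin m) ℝ)
    (hfeas : FeasibleSparse klDiv ν μ f P fhat What)
    (hmeas_outer : Measurable fun W => innerRisk klDiv ν μ f fhat (What W) W)
    (hopt : ∀ (g : (Fin d → ℝ) → Fin m → ℝ)
        (V : Matrix (Fin k) (Fin m) ℝ → Matrix (Fin k) (Fin m) ℝ),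
      FeasibleSparse klDiv ν μ f P g V →
        outerObj klDiv ν μ f P fhat What ≤ outerObj klDiv ν μ f P g V) :
    ∃ (Pmat D : Matrix (Fin m) (Fin m) ℝ),
      IsPermMatrix Pmat ∧ D.IsDiag ∧ IsUnit D.det ∧
      ∀ x ∈ Xs, fhat x = (D * Pmat).mulVec (f x) := by
  classical
  haveI : Nonempty (Fin m) := ⟨⟨0, hm⟩⟩
  obtain ⟨hfhatc, hfeas2⟩ := hfeas
  haveI : SecondCountableTopology (Matrix (Fin k) (Fin m) ℝ) :=
    inferInstanceAs (SecondCountableTopology (Fin k → Fin m → ℝ))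
  -- Step 0 : the optimal outer value is zero
  have hfeas_id : FeasibleSparse klDiv ν μ f P f (fun W => W) := by
    refine ⟨hf, fun W hW => ⟨le_rfl, fun Wt hWt => ?_⟩⟩
    have h0 : innerRisk klDiv ν μ f f W W = 0 := by
      simp [innerRisk, hkl_self]
    rw [h0]
    exact zero_le
  have houter0 : outerObj klDiv ν μ f P fhat What = 0 := by
    have h1 := hopt f (fun W => W) hfeas_id
    have h2 : outerObj klDiv ν μ f P f (fun W => W) = 0 := by
      simp [outerObj, innerRisk, hkl_self]
    rw [h2] at h1
    exact le_antisymm h1 zero_le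
  -- the good set
  set G : Set (Matrix (Fin k) (Fin m) ℝ) :=
    {W | innerRisk klDiv ν μ f fhat (What W) W = 0} with hGdef
  have hGc : P Gᶜ = 0 := by
    have h1 := (lintegral_eq_zero_iff hmeas_outer).mp houter0
    rw [Filter.EventuallyEq, ae_iff] at h1
    refine measure_mono_null ?_ h1
    intro W hW
    simpa [hGdef] using hW
  have hsuppc : P (msupport P)ᶜ = 0 := compl_msupport_null P
  -- the closed-set principle
  have hclosed : ∀ C : Set (Matrix (Fin k) (Fin m) ℝ), IsClosed C →
      msupport P ∩ G ⊆ C → msupport P ⊆ C := by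
    intro C hCc hsub
    refine msupport_subset_of_isClosed P hCc (measure_mono_null ?_
      (measure_union_null hsuppc hGc))
    intro W hW
    by_cases h1 : W ∈ msupport P
    · by_cases h2 : W ∈ G
      · exact absurd (hsub ⟨h1, h2⟩) hW
      · exact Or.inr h2
    · exact Or.inl h1
  -- pointwise equality on the support
  have hpt : ∀ W ∈ msupport P ∩ G, ∀ x ∈ Xs,
      W.mulVec (f x) = (What W).mulVec (fhat x) := by
    rintro W ⟨hWs, hWG⟩ x hx
    have h0 : ∫⁻ x, klDiv (ν (W.mulVec (f x))) (ν ((What W).mulVec (fhat x))) ∂(μ W) = 0 := hWG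
    have hae := (lintegral_eq_zero_iff (hmeas_inner fhat hfhatc (What W) W)).mp h0
    rw [Filter.EventuallyEq, ae_iff] at hae
    have hBnull : μ W {x | W.mulVec (f x) ≠ (What W).mulVec (fhat x)} = 0 := by
      refine measure_mono_null ?_ hae
      intro y hy
      simp only [Set.mem_setOf_eq] at hy ⊢
      intro h
      exact hy (hkl_id _ _ h)
    have hBopen : IsOpen {x | W.mulVec (f x) ≠ (What W).mulVec (fhat x)} :=
      isOpen_ne_fun (aux_continuous_mulVec_right W hf)
        (aux_continuous_mulVec_right (What W) hfhatc)
    by_contra hne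
    have hxsupp : x ∈ msupport (μ W) := by rw [hμsupp W hWs]; exact hx
    have hpos := hxsupp _ hBopen hne
    rw [hBnull] at hpos
    exact lt_irrefl 0 hpos
  -- data from (A4), (A5)
  obtain ⟨xs, hxsX, hFdet⟩ := hA4
  obtain ⟨Ws, idx, hWsupp, hWli⟩ := hA5
  set F : Matrix (Fin m) (Fin m) ℝ := Matrix.of (fun i t => f (xs t) i) with hFdef
  set Fh : Matrix (Fin m) (Fin m) ℝ := Matrix.of (fun i t => fhat (xs t) i) with hFhdef
  -- the basic matrix identity on good tasks
  have hE1 : ∀ W ∈ msupport P ∩ G, W * F = (What W) * Fh := by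
    intro W hW
    ext i t
    have h1 : (W * F) i t = W.mulVec (f (xs t)) i := by
      simp [Matrix.mul_apply, Matrix.mulVec, dotProduct, hFdef]
    have h2 : ((What W) * Fh) i t = (What W).mulVec (fhat (xs t)) i := by
      simp [Matrix.mul_apply, Matrix.mulVec, dotProduct, hFhdef]
    rw [h1, h2, hpt W hW (xs t) (hxsX t)]
  -- the independent rows from (A5)
  set w : Fin m → (Fin m → ℝ) := fun t => Ws t (idx t) with hwdef
  have hcard : Fintype.card (Fin m) = Module.finrank ℝ (Fin m → ℝ) := by
    rw [Module.finrank_fintype_fun_eq_card]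
  have hwspan : Submodule.span ℝ (Set.range w) = ⊤ :=
    hWli.span_eq_top_of_card_eq_finrank hcard
  have hw_eval : ∀ u : Fin m → ℝ, (∀ t, dotProduct (w t) u = 0) → u = 0 := by
    intro u hu
    have hall : ∀ v : Fin m → ℝ, dotProduct v u = 0 := by
      intro v
      have hv : v ∈ Submodule.span ℝ (Set.range w) := by
        rw [hwspan]; exact Submodule.mem_top
      induction hv using Submodule.span_induction with
      | mem x hx => obtain ⟨t, rfl⟩ := hx; exact hu t
      | zero => simp
      | add x y hx hy ihx ihy => simp [add_dotProduct, ihx, ihy]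
      | smul c x hx ih => simp [smul_dotProduct, ih]
    funext j
    have h1 := hall (Pi.single j 1)
    rw [single_dotProduct, one_mul] at h1
    exact h1
  -- Fh is invertible
  have hFunit : IsUnit F := (Matrix.isUnit_iff_isUnit_det _).mpr hFdet
  have hFhdet : IsUnit Fh.det := by
    set Rspan : Submodule ℝ (Fin m → ℝ) := Submodule.span ℝ (Set.range Fh) with hRdef
    have hCcl : IsClosed {W : Matrix (Fin k) (Fin m) ℝ |
        ∀ i, Matrix.vecMul (W i) F ∈ Rspan} := by
      have he : {W : Matrix (Fin k) (Fin m) ℝ | ∀ i, Matrix.vecMul (W i) F ∈ Rspan}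
          = ⋂ i, {W : Matrix (Fin k) (Fin m) ℝ | Matrix.vecMul (W i) F ∈ Rspan} := by
        ext W; simp
      rw [he]
      exact isClosed_iInter fun i =>
        IsClosed.preimage (aux_continuous_vecMul_row F i) Rspan.closed_of_finiteDimensional
    have hCsub : msupport P ⊆ {W : Matrix (Fin k) (Fin m) ℝ |
        ∀ i, Matrix.vecMul (W i) F ∈ Rspan} := by
      refine hclosed _ hCcl ?_
      intro W hW i
      have h1 : Matrix.vecMul (W i) F = Matrix.vecMul ((What W) i) Fh := by
        rw [← Matrix.mul_apply_eq_vecMul, ← Matrix.mul_apply_eq_vecMul, hE1 W hW]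
      rw [h1]
      have h2 : Matrix.vecMul ((What W) i) Fh ∈ LinearMap.range Fh.vecMulLinear :=
        ⟨(What W) i, rfl⟩
      rwa [range_vecMulLinear] at h2
    -- the images of the independent rows
    have hinj : Function.Injective F.vecMul :=
      Matrix.vecMul_injective_iff_isUnit.mpr hFunit
    have hyli : LinearIndependent ℝ (⇑F.vecMulLinear ∘ w) := by
      refine hWli.map' F.vecMulLinear (LinearMap.ker_eq_bot.mpr ?_)
      exact hinj
    have hyspan : Submodule.span ℝ (Set.range (⇑F.vecMulLinear ∘ w)) = ⊤ :=
      hyli.span_eq_top_of_card_eq_finrank hcard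
    have hRtop : Rspan = ⊤ := by
      rw [eq_top_iff, ← hyspan]
      refine Submodule.span_le.mpr ?_
      rintro v ⟨t, rfl⟩
      exact hCsub (hWsupp t) (idx t)
    have hsurj : Function.Surjective Fh.vecMul := by
      intro v
      have hv : v ∈ LinearMap.range Fh.vecMulLinear := by
        rw [range_vecMulLinear, show Fh.row = Fh from rfl, ← hRdef, hRtop]; exact Submodule.mem_top
      obtain ⟨c, hc⟩ := hv
      exact ⟨c, hc⟩
    exact (Matrix.isUnit_iff_isUnit_det _).mp (Matrix.vecMul_surjective_iff_isUnit.mp hsurj)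
  -- the mixing matrix
  set Mm : Matrix (Fin m) (Fin m) ℝ := F * Fh⁻¹ with hMdef
  have hMunit : IsUnit Mm.det := by
    rw [hMdef, Matrix.det_mul]
    exact hFdet.mul (Matrix.isUnit_nonsing_inv_det Fh hFhdet)
  have hWhat : ∀ W ∈ msupport P ∩ G, What W = W * Mm := by
    intro W hW
    calc What W = What W * (Fh * Fh⁻¹) := by
          rw [Matrix.mul_nonsing_inv Fh hFhdet, Matrix.mul_one]
      _ = (What W * Fh) * Fh⁻¹ := by rw [Matrix.mul_assoc]
      _ = (W * F) * Fh⁻¹ := by rw [hE1 W hW]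
      _ = W * Mm := by rw [hMdef, Matrix.mul_assoc]
  -- the representation identity : Mm ∘ fhat = f on Xs
  have hMf : ∀ x ∈ Xs, Mm.mulVec (fhat x) = f x := by
    intro x hx
    set u : Fin m → ℝ := Mm.mulVec (fhat x) - f x with hu
    have hCu : msupport P ⊆ {W : Matrix (Fin k) (Fin m) ℝ | W.mulVec u = 0} := by
      refine hclosed _ (IsClosed.preimage (aux_continuous_mulVec_left u)
        (isClosed_singleton)) ?_
      intro W hW
      have h2 := hpt W hW x hx
      have h3 : W.mulVec (Mm.mulVec (fhat x)) = W.mulVec (f x) := by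
        rw [Matrix.mulVec_mulVec, ← hWhat W hW, ← h2]
      show W.mulVec u = 0
      rw [hu, Matrix.mulVec_sub, h3, sub_self]
    have ht : ∀ t, dotProduct (w t) u = 0 := fun t =>
      congrFun (hCu (hWsupp t)) (idx t)
    have h4 := hw_eval u ht
    rw [hu, sub_eq_zero] at h4
    exact h4
  -- sparsity inequality
  have hsp : ∀ W ∈ msupport P ∩ G, colSparsity (W * Mm) ≤ colSparsity W := by
    intro W hW
    have h1 := (hfeas2 W hW.1).1
    rwa [hWhat W hW] at h1
  -- the star property from (A6)
  have hstar : ∀ S : Set (Fin m), 0 < P {W | colSupp W = S} →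
      (⋃ i ∈ S, {j | Mm i j ≠ 0}).ncard ≤ S.ncard := by
    intro S hS
    set CS : Set (Fin m) := ⋃ i ∈ S, {j | Mm i j ≠ 0} with hCS
    set bad : Set (Matrix (Fin k) (Fin m) ℝ) :=
      (⋃ j' ∈ CS, ({W : Matrix (Fin k) (Fin m) ℝ |
          W.mulVec (S.indicator fun i => Mm i j') = 0} ∩ {W | colSupp W = S}))
        ∪ (Gᶜ ∪ (msupport P)ᶜ) with hbad
    have hbad0 : P bad = 0 := by
      refine measure_union_null ?_ (measure_union_null hGc hsuppc)
      refine (measure_biUnion_null_iff CS.to_countable).mpr ?_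
      intro j' hj'
      obtain ⟨i0, hi0S, hi0⟩ : ∃ i ∈ S, Mm i j' ≠ 0 := by
        simpa [hCS] using hj'
      refine hA6 S hS _ ?_ ?_
      · intro h0
        apply hi0
        have h1 := congrFun h0 i0
        rwa [Set.indicator_of_mem hi0S] at h1
      · intro i hi
        by_contra hiS
        exact hi (Set.indicator_of_notMem hiS _)
    have hpos : 0 < P ({W | colSupp W = S} \ bad) := by
      rcases (show (0:ℝ≥0∞) ≤ P ({W | colSupp W = S} \ bad) from zero_le).lt_or_eq with h | h
      · exact h
      · exfalso
        have h1 : P {W | colSupp W = S} ≤ P (({W | colSupp W = S} \ bad) ∪ bad) :=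
          measure_mono fun W hW => by
            by_cases hb : W ∈ bad
            · exact Or.inr hb
            · exact Or.inl ⟨hW, hb⟩
        have h2 : P (({W | colSupp W = S} \ bad) ∪ bad) ≤ 0 := by
          refine le_trans (measure_union_le _ _) ?_
          rw [← h, hbad0, add_zero]
        exact absurd (lt_of_lt_of_le hS (le_trans h1 h2)) (lt_irrefl 0)
    obtain ⟨W, hWS, hWbad⟩ := nonempty_of_measure_ne_zero hpos.ne'
    have hWG : W ∈ G := by
      by_contra h
      exact hWbad (Or.inr (Or.inl h))
    have hWsup : W ∈ msupport P := by
      by_contra h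
      exact hWbad (Or.inr (Or.inr h))
    have hsub : CS ⊆ colSupp (W * Mm) := by
      intro j' hj'
      have hne : W.mulVec (S.indicator fun i => Mm i j') ≠ 0 := by
        intro h0
        exact hWbad (Or.inl (Set.mem_biUnion hj' ⟨h0, hWS⟩))
      have heq : W.mulVec (S.indicator fun i => Mm i j') = W.mulVec (fun i => Mm i j') := by
        funext i
        show (∑ t, W i t * (S.indicator fun i => Mm i j') t) = ∑ t, W i t * Mm t j'
        refine Finset.sum_congr rfl fun t _ => ?_
        by_cases htS : t ∈ S
        · rw [Set.indicator_of_mem htS]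
        · have hWt : W i t = 0 := by
            by_contra hW0
            exact htS (hWS ▸ (⟨i, hW0⟩ : t ∈ colSupp W))
          rw [hWt, zero_mul, zero_mul]
      rw [heq] at hne
      obtain ⟨i, hi⟩ := Function.ne_iff.mp hne
      refine ⟨i, ?_⟩
      have h5 : (W * Mm) i j' = W.mulVec (fun t => Mm t j') i := by
        simp [Matrix.mul_apply, Matrix.mulVec, dotProduct]
      rw [h5]
      simpa using hi
    calc CS.ncard ≤ (colSupp (W * Mm)).ncard :=
          Set.ncard_le_ncard hsub (Set.toFinite _)
      _ = colSparsity (W * Mm) := rfl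
      _ ≤ colSparsity W := hsp W ⟨hWsup, hWG⟩
      _ = S.ncard := by rw [colSparsity, hWS]
  -- apply the combinatorial lemma
  have hrowsM : LinearIndependent ℝ (fun i => Mm i) :=
    Matrix.linearIndependent_rows_iff_isUnit.mpr ((Matrix.isUnit_iff_isUnit_det _).mpr hMunit)
  have hcolsM : ∀ j, ∃ i, Mm i j ≠ 0 := by
    intro j
    by_contra h
    push_neg at h
    have h0 : Mm.det = 0 := Matrix.det_eq_zero_of_column_eq_zero j h
    rw [h0] at hMunit
    exact (not_isUnit_zero hMunit)
  obtain ⟨q, hqinj, hq1, hq2⟩ := aux_perm hrowsM hcolsM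
    {S : Set (Fin m) | 0 < P {W | colSupp W = S}}
    (fun S hS => hstar S hS) (fun p => hA7 p)
  have hqbij : Function.Bijective q := ⟨hqinj, Finite.injective_iff_surjective.mp hqinj⟩
  set σ : Equiv.Perm (Fin m) := Equiv.ofBijective q hqbij with hσdef
  set τ : Equiv.Perm (Fin m) := σ.symm with hτdef
  have hqτ : ∀ i, q (τ i) = i := fun i => σ.apply_symm_apply i
  set Pm : Matrix (Fin m) (Fin m) ℝ :=
    Matrix.of fun i j => if τ i = j then (1 : ℝ) else 0 with hPmdef
  set Dm : Matrix (Fin m) (Fin m) ℝ :=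
    Matrix.diagonal fun i => (Mm (τ i) i)⁻¹ with hDmdef
  have hdne : ∀ i, Mm (τ i) i ≠ 0 := by
    intro i
    have := hq1 (τ i)
    rwa [hqτ i] at this
  have hDP1 : (Dm * Pm) * Mm = 1 := by
    have hPmM : Pm * Mm = Matrix.of fun i t => Mm (τ i) t := by
      ext i t
      rw [Matrix.mul_apply]
      simp [hPmdef, ite_mul, Finset.sum_ite_eq, zero_mul]
    rw [Matrix.mul_assoc, hPmM]
    ext i t
    rw [hDmdef, Matrix.diagonal_mul]
    rcases eq_or_ne i t with rfl | hne
    · rw [Matrix.of_apply, Matrix.one_apply_eq, inv_mul_cancel₀ (hdne i)]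
    · have h0 : Mm (τ i) t = 0 := by
        by_contra h1
        have h2 := hq2 (τ i) t h1
        rw [hqτ i] at h2
        exact hne h2.symm
      rw [Matrix.of_apply, h0, mul_zero, Matrix.one_apply_ne hne]
  refine ⟨Pm, Dm, ⟨τ, rfl⟩, Matrix.isDiag_diagonal _, ?_, ?_⟩
  · rw [hDmdef, Matrix.det_diagonal]
    rw [isUnit_iff_ne_zero]
    exact Finset.prod_ne_zero_iff.mpr fun i _ => inv_ne_zero (hdne i)
  · intro x hx
    calc fhat x = (1 : Matrix (Fin m) (Fin m) ℝ).mulVec (fhat x) := by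
          rw [Matrix.one_mulVec]
      _ = ((Dm * Pm) * Mm).mulVec (fhat x) := by rw [hDP1]
      _ = (Dm * Pm).mulVec (Mm.mulVec (fhat x)) := by rw [Matrix.mulVec_mulVec]
      _ = (Dm * Pm).mulVec (f x) := by rw [hMf x hx]

end
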